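/- Suppose u_{i+1} − u_i = 1 and v_{i+1} − v_i = 1 for all i ∈ [n−1] (so u_i = i and v_i = m − n + i for all i ∈ [n]). Then for every integer r ≥ 2, the poset P_{𝓛×[r]} is pure if and only if r = m. -/

import Mathlib

namespace LadderPaper

/-- The tuple `a_{i,j}`: entry `t` is `u t` for `t < i` and `max (j + (t - i)) (u t)` for
`t ≥ i` (indices `t ∈ [1,n]`; entries outside `[1,n]` are set to `0`). -/
def atuple (u : ℕ → ℤ) (n i : ℕ) (j : ℤ) : ℕ → ℤ := fun t =>
  if 1 ≤ t ∧ t ≤ n then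
    (if t < i then u t else max (j + ((t : ℤ) - (i : ℤ))) (u t))
  else 0

/-- The tuple `b_{i,j}`: like `a_{i,j}` but with `i`-th entry `j - 1`. -/
def btuple (u : ℕ → ℤ) (n i : ℕ) (j : ℤ) : ℕ → ℤ := fun t =>
  if 1 ≤ t ∧ t ≤ n then
    (if t < i then u t
     else if t = i then j - 1
     else max (j + ((t : ℤ) - (i : ℤ))) (u t))
  else 0

/-- The tuple `(u_1, …, u_n)`. -/
def utuple (u : ℕ → ℤ) (n : ℕ) : ℕ → ℤ := fun t =>
  if 1 ≤ t ∧ t ≤ n then u t else 0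

/-- The lattice `𝓛` of tuples `c` with `u t ≤ c t ≤ v t` for `t ∈ [1,n]`, strictly
increasing entries, and (normalization) `c t = 0` outside `[1,n]`.  It carries the
componentwise (induced product) order. -/
def ladderL (n : ℕ) (u v : ℕ → ℤ) : Set (ℕ → ℤ) :=
  {c | (∀ t, 1 ≤ t → t ≤ n → u t ≤ c t ∧ c t ≤ v t) ∧
       (∀ t, 1 ≤ t → t + 1 ≤ n → c t < c (t + 1)) ∧
       (∀ t, t = 0 ∨ n < t → c t = 0)}

/-- The set `P_𝓛 = { a_{i,j} : i ∈ [n], j ∈ [u_i + 1, v_i] }`. -/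
def PL (n : ℕ) (u v : ℕ → ℤ) : Set (ℕ → ℤ) :=
  {x | ∃ i : ℕ, ∃ j : ℤ, 1 ≤ i ∧ i ≤ n ∧ u i + 1 ≤ j ∧ j ≤ v i ∧ x = atuple u n i j}

/-- The product poset `𝓛 × [r]`. -/
def ladderLr (n : ℕ) (u v : ℕ → ℤ) (r : ℤ) : Set ((ℕ → ℤ) × ℤ) :=
  {p | p.1 ∈ ladderL n u v ∧ 1 ≤ p.2 ∧ p.2 ≤ r}

/-- The set `P_{𝓛×[r]} = { (a_{i,j}, 1) } ∪ { ((u_1,…,u_n), k) : k ∈ [2,r] }`. -/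
def PLr (n : ℕ) (u v : ℕ → ℤ) (r : ℤ) : Set ((ℕ → ℤ) × ℤ) :=
  {p | (p.1 ∈ PL n u v ∧ p.2 = 1) ∨ (p.1 = utuple u n ∧ 2 ≤ p.2 ∧ p.2 ≤ r)}

/-- `ε_i > 1`, with the convention `ε_n > 1` (i.e. `i = n` or `u_{i+1} - u_i > 1`). -/
def epsGt1 (u : ℕ → ℤ) (n i : ℕ) : Prop := i = n ∨ 1 < u (i + 1) - u i

/-- `θ_{i-1} > 1`, with the convention `θ_0 > 1` (i.e. `i = 1` or `v_i - v_{i-1} > 1`). -/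
def thetaGt1 (v : ℕ → ℤ) (i : ℕ) : Prop := i = 1 ∨ 1 < v i - v (i - 1)

/-- Membership in `C = { i ∈ [n-1] : v_i < u_{i+1} } ∪ { n }`. -/
def inC (n : ℕ) (u v : ℕ → ℤ) (i : ℕ) : Prop :=
  (1 ≤ i ∧ i + 1 ≤ n ∧ v i < u (i + 1)) ∨ i = n

/-- The set `C = { i ∈ [n-1] : v_i < u_{i+1} } ∪ { n }`. -/
def Cset (n : ℕ) (u v : ℕ → ℤ) : Set ℕ :=
  {i | 1 ≤ i ∧ i + 1 ≤ n ∧ v i < u (i + 1)} ∪ {n}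

/-- `[p,q]` is one of the blocks `[p_s, q_s]` determined by `C`: `q ∈ C`,
no element of `C` lies in `[p, q-1]`, and either `p = 1` or `p - 1 ∈ C`. -/
def IsBlock (n : ℕ) (u v : ℕ → ℤ) (p q : ℕ) : Prop :=
  1 ≤ p ∧ p ≤ q ∧ q ≤ n ∧ inC n u v q ∧
    (∀ j, p ≤ j → j < q → ¬ inC n u v j) ∧ (p = 1 ∨ inC n u v (p - 1))

/-- `i0 = min { i ∈ [p,q] : ε_i > 1 }` (with the convention `ε_n > 1`). -/
def IsBlockMin (n : ℕ) (u : ℕ → ℤ) (p q i0 : ℕ) : Prop :=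
  p ≤ i0 ∧ i0 ≤ q ∧ epsGt1 u n i0 ∧ ∀ j, p ≤ j → j < i0 → ¬ epsGt1 u n j

/-- The comparability graph of a poset: two distinct elements are adjacent
iff they are comparable. -/
def compGraph (α : Type*) [Preorder α] : SimpleGraph α where
  Adj x y := x ≠ y ∧ (x ≤ y ∨ y ≤ x)
  symm := ⟨fun x y h => ⟨Ne.symm h.1, Or.symm h.2⟩⟩
  loopless := ⟨fun x h => h.1 rfl⟩

/-- A poset is pure if all of its maximal chains have the same cardinality
(equivalently, the same length). -/
def IsPure (α : Type*) [Preorder α] : Prop :=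
  ∀ A B : Set α, IsMaxChain (· ≤ ·) A → IsMaxChain (· ≤ ·) B → A.ncard = B.ncard


section Aux

/-- Helper: an element comparable to everything in a maximal chain belongs to it. -/
lemma maxChain_mem_of_comp {α : Type*} {r : α → α → Prop} {A : Set α}
    (hA : IsMaxChain r A) {z : α} (hz : ∀ b ∈ A, z ≠ b → r z b ∨ r b z) : z ∈ A := by
  by_contra h
  have hins : IsChain r (insert z A) := hA.1.insert hz
  have heq := hA.2 hins (Set.subset_insert z A)
  exact h (by rw [heq]; exact Set.mem_insert z A)

variable {n m : ℕ} {u v : ℕ → ℤ}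

lemma atuple_eval (hu : ∀ t, 1 ≤ t → t ≤ n → u t = (t:ℤ)) {i : ℕ} {j : ℤ}
    (hj : (i:ℤ) + 1 ≤ j) {t : ℕ} (ht1 : 1 ≤ t) (htn : t ≤ n) :
    atuple u n i j t = if t < i then (t:ℤ) else j + ((t:ℤ) - i) := by
  unfold atuple
  rw [if_pos ⟨ht1, htn⟩]
  by_cases h : t < i
  · simp [h, hu t ht1 htn]
  · rw [if_neg h, if_neg h, max_eq_left]
    rw [hu t ht1 htn]
    have : (i:ℤ) ≤ t := by exact_mod_cast Nat.le_of_not_lt h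
    linarith

lemma atuple_outside {i : ℕ} {j : ℤ} {t : ℕ} (ht : ¬ (1 ≤ t ∧ t ≤ n)) :
    atuple u n i j t = 0 := by
  unfold atuple; rw [if_neg ht]

lemma atuple_le_iff (hu : ∀ t, 1 ≤ t → t ≤ n → u t = (t:ℤ))
    {i i' : ℕ} {j j' : ℤ} (hi1 : 1 ≤ i) (hin : i ≤ n) (hj : (i:ℤ) + 1 ≤ j)
    (hi1' : 1 ≤ i') (hin' : i' ≤ n) (hj' : (i':ℤ) + 1 ≤ j') :
    atuple u n i j ≤ atuple u n i' j' ↔ (i' ≤ i ∧ j - i ≤ j' - i') := by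
  constructor
  · intro h
    have hi := h i
    rw [atuple_eval hu hj hi1 hin, atuple_eval hu hj' hi1 hin] at hi
    rw [if_neg (lt_irrefl i)] at hi
    by_cases hii : i < i'
    · rw [if_pos hii] at hi; simp at hi; linarith
    · rw [if_neg hii] at hi
      have hii' : i' ≤ i := Nat.le_of_not_lt hii
      have : (i':ℤ) ≤ i := by exact_mod_cast hii'
      exact ⟨hii', by linarith⟩
  · rintro ⟨hii, hd⟩
    intro t
    by_cases ht : 1 ≤ t ∧ t ≤ n
    · rw [atuple_eval hu hj ht.1 ht.2, atuple_eval hu hj' ht.1 ht.2]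
      have hiiz : (i':ℤ) ≤ i := by exact_mod_cast hii
      by_cases h1 : t < i'
      · rw [if_pos h1, if_pos (lt_of_lt_of_le h1 hii)]
      · rw [if_neg h1]
        have h1z : (i':ℤ) ≤ t := by exact_mod_cast Nat.le_of_not_lt h1
        by_cases h2 : t < i
        · rw [if_pos h2]; linarith
        · rw [if_neg h2]; linarith
    · rw [atuple_outside ht, atuple_outside ht]

lemma not_atuple_le_utuple (hu : ∀ t, 1 ≤ t → t ≤ n → u t = (t:ℤ))
    {i : ℕ} {j : ℤ} (hi1 : 1 ≤ i) (hin : i ≤ n) (hj : (i:ℤ) + 1 ≤ j) :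
    ¬ atuple u n i j ≤ utuple u n := by
  intro h
  have hi := h i
  rw [atuple_eval hu hj hi1 hin, if_neg (lt_irrefl i)] at hi
  unfold utuple at hi
  rw [if_pos ⟨hi1, hin⟩, hu i hi1 hin] at hi
  simp at hi; linarith

lemma utuple_ne_atuple (hu : ∀ t, 1 ≤ t → t ≤ n → u t = (t:ℤ))
    {i : ℕ} {j : ℤ} (hi1 : 1 ≤ i) (hin : i ≤ n) (hj : (i:ℤ) + 1 ≤ j) :
    utuple u n ≠ atuple u n i j := by
  intro h
  have hi := congrFun h i
  rw [atuple_eval hu hj hi1 hin, if_neg (lt_irrefl i)] at hi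
  unfold utuple at hi
  rw [if_pos ⟨hi1, hin⟩, hu i hi1 hin] at hi
  simp at hi; linarith

/-- Rank function on tuples. -/
noncomputable def rk (n : ℕ) (x : ℕ → ℤ) : ℤ :=
  ({t : ℕ | 1 ≤ t ∧ t ≤ n ∧ x t ≠ (t:ℤ)}.ncard : ℤ) + x n - n - 2

lemma rk_atuple (hu : ∀ t, 1 ≤ t → t ≤ n → u t = (t:ℤ)) {i : ℕ} {j : ℤ}
    (hi1 : 1 ≤ i) (hin : i ≤ n) (hj : (i:ℤ) + 1 ≤ j) :
    rk n (atuple u n i j) = (n:ℤ) - 2*i + j - 1 := by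
  have hn1 : 1 ≤ n := le_trans hi1 hin
  have hset : {t : ℕ | 1 ≤ t ∧ t ≤ n ∧ atuple u n i j t ≠ (t:ℤ)} = Set.Icc i n := by
    ext t
    simp only [Set.mem_setOf_eq, Set.mem_Icc]
    constructor
    · rintro ⟨ht1, htn, hne⟩
      refine ⟨?_, htn⟩
      by_contra hti
      apply hne
      rw [atuple_eval hu hj ht1 htn, if_pos (Nat.lt_of_not_le hti)]
    · rintro ⟨hit, htn⟩
      have ht1 : 1 ≤ t := le_trans hi1 hit
      refine ⟨ht1, htn, ?_⟩
      rw [atuple_eval hu hj ht1 htn, if_neg (Nat.not_lt.mpr hit)]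
      have : (i:ℤ) ≤ t := by exact_mod_cast hit
      intro hc; linarith
  have hcard : ({t : ℕ | 1 ≤ t ∧ t ≤ n ∧ atuple u n i j t ≠ (t:ℤ)}.ncard : ℤ)
      = (n:ℤ) + 1 - i := by
    rw [hset, ← Finset.coe_Icc, Set.ncard_coe_finset, Nat.card_Icc]
    omega
  have hlast : atuple u n i j n = j + ((n:ℤ) - i) := by
    rw [atuple_eval hu hj hn1 le_rfl, if_neg (Nat.not_lt.mpr hin)]
  unfold rk
  rw [hcard, hlast]; ring

lemma exists_mid {i i' : ℕ} {j j' : ℤ}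
    (hi1 : 1 ≤ i) (hin : i ≤ n) (hj : (i:ℤ) + 1 ≤ j) (hjm : j ≤ (m:ℤ) - n + i)
    (hi1' : 1 ≤ i') (hin' : i' ≤ n) (hj' : (i':ℤ) + 1 ≤ j') (hjm' : j' ≤ (m:ℤ) - n + i')
    (hii : i' ≤ i) (hd : j - i ≤ j' - i')
    (hgap : ((n:ℤ) - 2*i + j - 1) + 2 ≤ (n:ℤ) - 2*i' + j' - 1) :
    ∃ (i'' : ℕ) (j'' : ℤ), 1 ≤ i'' ∧ i'' ≤ n ∧ (i'':ℤ) + 1 ≤ j'' ∧ j'' ≤ (m:ℤ) - n + i'' ∧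
      (i'' ≤ i ∧ j - i ≤ j'' - i'') ∧ (i' ≤ i'' ∧ j'' - i'' ≤ j' - i') ∧
      (n:ℤ) - 2*i'' + j'' - 1 = ((n:ℤ) - 2*i + j - 1) + 1 := by
  have hiiz : (i':ℤ) ≤ i := by exact_mod_cast hii
  by_cases hlt : i' < i
  · refine ⟨i - 1, j - 1, ?_, ?_, ?_, ?_, ⟨Nat.sub_le i 1, ?_⟩, ⟨?_, ?_⟩, ?_⟩ <;> omega
  · have hieq : i' = i := le_antisymm hii (Nat.le_of_not_lt hlt)
    subst hieq
    refine ⟨i', j + 1, hi1', hin', by linarith, by linarith, ⟨le_rfl, by linarith⟩,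
      ⟨le_rfl, by linarith⟩, by ring⟩

lemma PL_params (hu : ∀ t, 1 ≤ t → t ≤ n → u t = (t:ℤ))
    (hv : ∀ t, 1 ≤ t → t ≤ n → v t = (m:ℤ) - n + t)
    {x : ℕ → ℤ} (hx : x ∈ PL n u v) :
    ∃ (i : ℕ) (j : ℤ), 1 ≤ i ∧ i ≤ n ∧ (i:ℤ) + 1 ≤ j ∧ j ≤ (m:ℤ) - n + i ∧
      x = atuple u n i j := by
  obtain ⟨i, j, hi1, hin, hj1, hj2, hxe⟩ := hx
  rw [hu i hi1 hin] at hj1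
  rw [hv i hi1 hin] at hj2
  exact ⟨i, j, hi1, hin, hj1, hj2, hxe⟩

lemma ncard_Uchain {r : ℤ}
    (hu : ∀ t, 1 ≤ t → t ≤ n → u t = (t:ℤ))
    {A : Set ↥(PLr n u v r)} (hA : IsMaxChain (· ≤ ·) A)
    (hall : ∀ a ∈ A, (a : (ℕ → ℤ) × ℤ).1 = utuple u n) :
    A.ncard = (r - 1).toNat := by
  classical
  set f : ↥(PLr n u v r) → ℤ := fun x => (x : (ℕ → ℤ) × ℤ).2 with hf
  have hinj : Set.InjOn f A := by
    intro a ha b hb hab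
    apply Subtype.ext
    apply Prod.ext
    · rw [hall a ha, hall b hb]
    · exact hab
  have himg : f '' A = Set.Icc 2 r := by
    apply Set.Subset.antisymm
    · rintro z ⟨a, ha, rfl⟩
      rcases a.2 with h1 | h2
      · exfalso
        obtain ⟨i, j, hi1, hin, hj1, hj2, hxe⟩ := h1.1
        rw [hu i hi1 hin] at hj1
        exact utuple_ne_atuple hu hi1 hin hj1 ((hall a ha) ▸ hxe)
      · exact ⟨h2.2.1, h2.2.2⟩
    · rintro k ⟨hk2, hkr⟩
      have hz : ((utuple u n, k) : (ℕ → ℤ) × ℤ) ∈ PLr n u v r := Or.inr ⟨rfl, hk2, hkr⟩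
      have hzA : (⟨(utuple u n, k), hz⟩ : ↥(PLr n u v r)) ∈ A := by
        apply maxChain_mem_of_comp hA
        intro b hb _
        have hb1 := hall b hb
        rcases le_total k (b : (ℕ → ℤ) × ℤ).2 with h | h
        · left
          rw [← Subtype.coe_le_coe, Prod.le_def]
          exact ⟨le_of_eq hb1.symm, h⟩
        · right
          rw [← Subtype.coe_le_coe, Prod.le_def]
          exact ⟨le_of_eq hb1, h⟩
      exact ⟨_, hzA, rfl⟩
  rw [← Set.ncard_image_of_injOn hinj, himg, ← Finset.coe_Icc, Set.ncard_coe_finset,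
    Int.card_Icc]
  congr 1
  ring

lemma ncard_Gchain {r : ℤ}
    (hn : 1 ≤ n) (hnm : n < m)
    (hu : ∀ t, 1 ≤ t → t ≤ n → u t = (t:ℤ))
    (hv : ∀ t, 1 ≤ t → t ≤ n → v t = (m:ℤ) - n + t)
    {A : Set ↥(PLr n u v r)} (hA : IsMaxChain (· ≤ ·) A)
    (hall : ∀ a ∈ A, (a : (ℕ → ℤ) × ℤ).1 ∈ PL n u v ∧ (a : (ℕ → ℤ) × ℤ).2 = 1) :
    A.ncard = m - 1 := by
  classical
  have hnmz : (n:ℤ) < m := by exact_mod_cast hnm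
  set f : ↥(PLr n u v r) → ℤ := fun x => rk n (x : (ℕ → ℤ) × ℤ).1 with hf
  -- monotonicity facts
  have key : ∀ a b : ↥(PLr n u v r), (a : (ℕ → ℤ) × ℤ).1 ∈ PL n u v →
      (b : (ℕ → ℤ) × ℤ).1 ∈ PL n u v → (a : (ℕ → ℤ) × ℤ) ≤ b →
      f a ≤ f b ∧ (f a = f b → (a : (ℕ → ℤ) × ℤ).1 = (b : (ℕ → ℤ) × ℤ).1) := by
    intro a b hap hbp hab
    obtain ⟨i, j, hi1, hin, hj1, hj2, hxa⟩ := PL_params hu hv hap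
    obtain ⟨i', j', hi1', hin', hj1', hj2', hxb⟩ := PL_params hu hv hbp
    have h1 : (a : (ℕ → ℤ) × ℤ).1 ≤ (b : (ℕ → ℤ) × ℤ).1 := hab.1
    rw [hxa, hxb] at h1
    obtain ⟨hii, hd⟩ := (atuple_le_iff hu hi1 hin hj1 hi1' hin' hj1').mp h1
    have hiiz : (i':ℤ) ≤ i := by exact_mod_cast hii
    have hfa : f a = (n:ℤ) - 2*i + j - 1 := by rw [hf]; simp only; rw [hxa, rk_atuple hu hi1 hin hj1]
    have hfb : f b = (n:ℤ) - 2*i' + j' - 1 := by rw [hf]; simp only; rw [hxb, rk_atuple hu hi1' hin' hj1']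
    constructor
    · rw [hfa, hfb]; linarith
    · intro hfe
      rw [hfa, hfb] at hfe
      have h2 : (i:ℤ) = i' := by linarith
      have h3 : i = i' := by exact_mod_cast h2
      have h4 : j = j' := by rw [h3] at hfe; linarith
      rw [hxa, hxb, h3, h4]
  have hinj : Set.InjOn f A := by
    intro a ha b hb hab
    rcases eq_or_ne a b with h | h
    · exact h
    · have hcomp := hA.1 ha hb h
      have hsnd : (a : (ℕ → ℤ) × ℤ).2 = (b : (ℕ → ℤ) × ℤ).2 := by
        rw [(hall a ha).2, (hall b hb).2]
      rcases hcomp with hle | hle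
      · exact Subtype.ext (Prod.ext ((key a b (hall a ha).1 (hall b hb).1 hle).2 hab) hsnd)
      · exact Subtype.ext (Prod.ext ((key b a (hall b hb).1 (hall a ha).1 hle).2 hab.symm).symm hsnd)
  -- bottom and top
  have hb0p : atuple u n n ((n:ℤ)+1) ∈ PL n u v := by
    refine ⟨n, (n:ℤ)+1, hn, le_rfl, ?_, ?_, rfl⟩
    · rw [hu n hn le_rfl]
    · rw [hv n hn le_rfl]; linarith
  have hb0m : ((atuple u n n ((n:ℤ)+1), 1) : (ℕ → ℤ) × ℤ) ∈ PLr n u v r :=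
    Or.inl ⟨hb0p, rfl⟩
  set b0 : ↥(PLr n u v r) := ⟨(atuple u n n ((n:ℤ)+1), 1), hb0m⟩ with hb0
  have ht0p : atuple u n 1 ((m:ℤ)-n+1) ∈ PL n u v := by
    refine ⟨1, (m:ℤ)-n+1, le_rfl, hn, ?_, ?_, rfl⟩
    · rw [hu 1 le_rfl hn]; push_cast; linarith
    · rw [hv 1 le_rfl hn]; push_cast; linarith
  have ht0m : ((atuple u n 1 ((m:ℤ)-n+1), 1) : (ℕ → ℤ) × ℤ) ∈ PLr n u v r :=
    Or.inl ⟨ht0p, rfl⟩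
  set t0 : ↥(PLr n u v r) := ⟨(atuple u n 1 ((m:ℤ)-n+1), 1), ht0m⟩ with ht0
  have hb0le : ∀ b ∈ A, b0 ≤ b := by
    intro b hb
    obtain ⟨i, j, hi1, hin, hj1, hj2, hxb⟩ := PL_params hu hv (hall b hb).1
    rw [← Subtype.coe_le_coe, Prod.le_def]
    constructor
    · show atuple u n n ((n:ℤ)+1) ≤ (b : (ℕ → ℤ) × ℤ).1
      rw [hxb]
      rw [atuple_le_iff hu hn le_rfl (by linarith) hi1 hin hj1]
      have : (i:ℤ) ≤ n := by exact_mod_cast hin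
      exact ⟨hin, by linarith⟩
    · rw [(hall b hb).2]
  have ht0le : ∀ b ∈ A, b ≤ t0 := by
    intro b hb
    obtain ⟨i, j, hi1, hin, hj1, hj2, hxb⟩ := PL_params hu hv (hall b hb).1
    rw [← Subtype.coe_le_coe, Prod.le_def]
    constructor
    · show (b : (ℕ → ℤ) × ℤ).1 ≤ atuple u n 1 ((m:ℤ)-n+1)
      rw [hxb]
      rw [atuple_le_iff hu hi1 hin hj1 le_rfl hn (by push_cast; linarith)]
      have : (1:ℤ) ≤ i := by exact_mod_cast hi1
      exact ⟨hi1, by push_cast; linarith⟩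
    · rw [(hall b hb).2]
  have hb0A : b0 ∈ A := by
    apply maxChain_mem_of_comp hA
    intro b hb _
    exact Or.inl (hb0le b hb)
  have ht0A : t0 ∈ A := by
    apply maxChain_mem_of_comp hA
    intro b hb _
    exact Or.inr (ht0le b hb)
  have hfb0 : f b0 = 0 := by
    rw [hf]; simp only [hb0]
    rw [rk_atuple hu hn le_rfl (by linarith)]; ring
  have hft0 : f t0 = (m:ℤ) - 2 := by
    rw [hf]; simp only [ht0]
    rw [rk_atuple hu le_rfl hn (by push_cast; linarith)]; push_cast; ring
  have himg : f '' A = Set.Icc 0 ((m:ℤ)-2) := by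
    apply Set.Subset.antisymm
    · rintro z ⟨a, ha, rfl⟩
      obtain ⟨i, j, hi1, hin, hj1, hj2, hxa⟩ := PL_params hu hv (hall a ha).1
      have hfa : f a = (n:ℤ) - 2*i + j - 1 := by
        rw [hf]; simp only; rw [hxa, rk_atuple hu hi1 hin hj1]
      have hiz : (1:ℤ) ≤ i := by exact_mod_cast hi1
      have hinz : (i:ℤ) ≤ n := by exact_mod_cast hin
      rw [hfa]
      constructor <;> [linarith; linarith]
    · rintro k ⟨hk0, hkm⟩
      by_contra hknot
      have hknot' : ∀ a ∈ A, f a ≠ k := by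
        intro a ha hc
        exact hknot ⟨a, ha, hc⟩
      have hk0' : 0 < k := lt_of_le_of_ne hk0 (by
        intro hc; exact hknot' b0 hb0A (by rw [hfb0, ← hc]))
      have hkm' : k < (m:ℤ) - 2 := lt_of_le_of_ne hkm (by
        intro hc; exact hknot' t0 ht0A (by rw [hft0, hc]))
      -- greatest element below k
      obtain ⟨zlo, ⟨alo, haloA, hfalo, hzlok⟩, hub⟩ :=
        Int.exists_greatest_of_bdd (P := fun z => ∃ a ∈ A, f a = z ∧ z < k)
          ⟨k, by rintro z ⟨a, ha, hfa, hzk⟩; linarith⟩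
          ⟨0, b0, hb0A, hfb0, hk0'⟩
      obtain ⟨zhi, ⟨ahi, hahiA, hfahi, hzhik⟩, hlb⟩ :=
        Int.exists_least_of_bdd (P := fun z => ∃ a ∈ A, f a = z ∧ k < z)
          ⟨k, by rintro z ⟨a, ha, hfa, hzk⟩; linarith⟩
          ⟨(m:ℤ)-2, t0, ht0A, hft0, hkm'⟩
      -- every element below is ≤ alo, every above is ≥ ahi
      have hlo_ub : ∀ a ∈ A, f a < k → a ≤ alo := by
        intro a ha hfa
        rcases eq_or_ne a alo with h | h
        · exact le_of_eq h
        rcases hA.1 ha haloA h with hle | hle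
        · exact hle
        · have h1 := key alo a (hall alo haloA).1 (hall a ha).1 hle
          have h2 : f a ≤ zlo := hub (f a) ⟨a, ha, rfl, hfa⟩
          have h3 : f alo = f a := le_antisymm h1.1 (by rw [hfalo]; exact h2)
          have : (alo : (ℕ → ℤ) × ℤ) = a :=
            Prod.ext (h1.2 h3) (by rw [(hall alo haloA).2, (hall a ha).2])
          exact le_of_eq (Subtype.ext this).symm
      have hhi_lb : ∀ a ∈ A, k < f a → ahi ≤ a := by
        intro a ha hfa
        rcases eq_or_ne a ahi with h | h
        · exact le_of_eq h.symm
        rcases hA.1 ha hahiA h with hle | hle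
        · have h1 := key a ahi (hall a ha).1 (hall ahi hahiA).1 hle
          have h2 : zhi ≤ f a := hlb (f a) ⟨a, ha, rfl, hfa⟩
          have h3 : f a = f ahi := le_antisymm h1.1 (by rw [hfahi]; exact h2)
          have : (a : (ℕ → ℤ) × ℤ) = (ahi : (ℕ → ℤ) × ℤ) :=
            Prod.ext (h1.2 h3) (by rw [(hall a ha).2, (hall ahi hahiA).2])
          exact le_of_eq (Subtype.ext this).symm
        · exact hle
      -- alo ≤ ahi
      have hlohi : (alo : (ℕ → ℤ) × ℤ) ≤ (ahi : (ℕ → ℤ) × ℤ) := by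
        have hne : alo ≠ ahi := by
          intro hc
          rw [hc, hfahi] at hfalo
          linarith
        rcases hA.1 haloA hahiA hne with hle | hle
        · exact hle
        · exfalso
          have h1 := key ahi alo (hall ahi hahiA).1 (hall alo haloA).1 hle
          rw [hfahi, hfalo] at h1
          linarith [h1.1]
      obtain ⟨i, j, hi1, hin, hj1, hj2, hxa⟩ := PL_params hu hv (hall alo haloA).1
      obtain ⟨i', j', hi1', hin', hj1', hj2', hxb⟩ := PL_params hu hv (hall ahi hahiA).1
      have h1 : (alo : (ℕ → ℤ) × ℤ).1 ≤ (ahi : (ℕ → ℤ) × ℤ).1 := hlohi.1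
      rw [hxa, hxb] at h1
      obtain ⟨hii, hd⟩ := (atuple_le_iff hu hi1 hin hj1 hi1' hin' hj1').mp h1
      have hfalo' : f alo = (n:ℤ) - 2*i + j - 1 := by
        rw [hf]; simp only; rw [hxa, rk_atuple hu hi1 hin hj1]
      have hfahi' : f ahi = (n:ℤ) - 2*i' + j' - 1 := by
        rw [hf]; simp only; rw [hxb, rk_atuple hu hi1' hin' hj1']
      have hgap : ((n:ℤ) - 2*i + j - 1) + 2 ≤ (n:ℤ) - 2*i' + j' - 1 := by
        rw [← hfalo', ← hfahi', hfalo, hfahi]; omega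
      obtain ⟨i'', j'', hi1'', hin'', hj1'', hj2'', ⟨hiiL, hdL⟩, ⟨hiiR, hdR⟩, hrkmid⟩ :=
        exists_mid hi1 hin hj1 hj2 hi1' hin' hj1' hj2' hii hd hgap
      have hzp : atuple u n i'' j'' ∈ PL n u v := by
        refine ⟨i'', j'', hi1'', hin'', ?_, ?_, rfl⟩
        · rw [hu i'' hi1'' hin'']; exact hj1''
        · rw [hv i'' hi1'' hin'']; exact hj2''
      have hzm : ((atuple u n i'' j'', 1) : (ℕ → ℤ) × ℤ) ∈ PLr n u v r :=
        Or.inl ⟨hzp, rfl⟩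
      set z : ↥(PLr n u v r) := ⟨(atuple u n i'' j'', 1), hzm⟩ with hz
      have hfz : f z = ((n:ℤ) - 2*i + j - 1) + 1 := by
        rw [hf]; simp only [hz]; rw [rk_atuple hu hi1'' hin'' hj1'']; exact hrkmid
      have hloz : alo ≤ z := by
        rw [← Subtype.coe_le_coe, Prod.le_def]
        constructor
        · show (alo : (ℕ → ℤ) × ℤ).1 ≤ atuple u n i'' j''
          rw [hxa, atuple_le_iff hu hi1 hin hj1 hi1'' hin'' hj1'']
          exact ⟨hiiL, hdL⟩
        · rw [(hall alo haloA).2]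
      have hzhi' : z ≤ ahi := by
        rw [← Subtype.coe_le_coe, Prod.le_def]
        constructor
        · show atuple u n i'' j'' ≤ (ahi : (ℕ → ℤ) × ℤ).1
          rw [hxb, atuple_le_iff hu hi1'' hin'' hj1'' hi1' hin' hj1']
          exact ⟨hiiR, hdR⟩
        · rw [(hall ahi hahiA).2]
      have hzA : z ∈ A := by
        apply maxChain_mem_of_comp hA
        intro b hb _
        rcases lt_or_gt_of_ne (hknot' b hb) with hblt | hbgt
        · exact Or.inr (le_trans (hlo_ub b hb hblt) hloz)
        · exact Or.inl (le_trans hzhi' (hhi_lb b hb hbgt))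
      have hfz_lt : f z < k := by
        have h1 : f z ≠ k := hknot' z hzA
        have h2 : f z ≤ k := by rw [hfz, ← hfalo', hfalo]; omega
        exact lt_of_le_of_ne h2 h1
      have := hub (f z) ⟨z, hzA, rfl, hfz_lt⟩
      rw [hfz, ← hfalo', hfalo] at this
      omega
  rw [← Set.ncard_image_of_injOn hinj, himg, ← Finset.coe_Icc, Set.ncard_coe_finset,
    Int.card_Icc]
  omega

lemma cross_incomp {r : ℤ}
    (hu : ∀ t, 1 ≤ t → t ≤ n → u t = (t:ℤ))
    (hv : ∀ t, 1 ≤ t → t ≤ n → v t = (m:ℤ) - n + t)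
    (x y : ↥(PLr n u v r))
    (hx : (x : (ℕ → ℤ) × ℤ).1 ∈ PL n u v ∧ (x : (ℕ → ℤ) × ℤ).2 = 1)
    (hy : (y : (ℕ → ℤ) × ℤ).1 = utuple u n ∧ 2 ≤ (y : (ℕ → ℤ) × ℤ).2) :
    x ≠ y ∧ ¬ x ≤ y ∧ ¬ y ≤ x := by
  obtain ⟨i, j, hi1, hin, hj1, hj2, hxe⟩ := PL_params hu hv hx.1
  refine ⟨?_, ?_, ?_⟩
  · intro hc
    rw [hc] at hx
    rw [hx.2] at hy
    linarith [hy.2]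
  · intro hle
    have h1 : (x : (ℕ → ℤ) × ℤ) ≤ (y : (ℕ → ℤ) × ℤ) := Subtype.coe_le_coe.mpr hle
    have h2 := h1.1
    rw [hxe, hy.1] at h2
    exact not_atuple_le_utuple hu hi1 hin hj1 h2
  · intro hle
    have h1 : (y : (ℕ → ℤ) × ℤ) ≤ (x : (ℕ → ℤ) × ℤ) := Subtype.coe_le_coe.mpr hle
    have h2 := h1.2
    rw [hx.2] at h2
    linarith [hy.2]

lemma chain_dichotomy {r : ℤ} (hr : 2 ≤ r)
    (hu : ∀ t, 1 ≤ t → t ≤ n → u t = (t:ℤ))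
    (hv : ∀ t, 1 ≤ t → t ≤ n → v t = (m:ℤ) - n + t)
    {A : Set ↥(PLr n u v r)} (hA : IsMaxChain (· ≤ ·) A) :
    (∀ a ∈ A, (a : (ℕ → ℤ) × ℤ).1 = utuple u n) ∨
      (∀ a ∈ A, (a : (ℕ → ℤ) × ℤ).1 ∈ PL n u v ∧ (a : (ℕ → ℤ) × ℤ).2 = 1) := by
  have hz0m : ((utuple u n, 2) : (ℕ → ℤ) × ℤ) ∈ PLr n u v r := Or.inr ⟨rfl, le_rfl, hr⟩
  have hne : A.Nonempty := by
    by_contra h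
    rw [Set.not_nonempty_iff_eq_empty] at h
    subst h
    have hchain : IsChain (· ≤ ·) ({⟨(utuple u n, 2), hz0m⟩} : Set ↥(PLr n u v r)) :=
      Set.subsingleton_singleton.isChain
    have h2 := hA.2 hchain (Set.empty_subset _)
    exact (Set.singleton_ne_empty _) h2.symm
  obtain ⟨a0, ha0⟩ := hne
  have ha0m : (a0 : (ℕ → ℤ) × ℤ) ∈ PLr n u v r := a0.2
  rcases ha0m with h0 | h0
  · right
    intro a ha
    have ham : (a : (ℕ → ℤ) × ℤ) ∈ PLr n u v r := a.2
    rcases ham with h | h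
    · exact h
    · exfalso
      obtain ⟨hne', hn1, hn2⟩ := cross_incomp hu hv a0 a h0 ⟨h.1, h.2.1⟩
      rcases hA.1 ha0 ha hne' with hle | hle
      · exact hn1 hle
      · exact hn2 hle
  · left
    intro a ha
    have ham : (a : (ℕ → ℤ) × ℤ) ∈ PLr n u v r := a.2
    rcases ham with h | h
    · exfalso
      obtain ⟨hne', hn1, hn2⟩ := cross_incomp hu hv a a0 h ⟨h0.1, h0.2.1⟩
      rcases hA.1 ha ha0 hne' with hle | hle
      · exact hn1 hle
      · exact hn2 hle
    · exact h.1

end Aux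

theorem stmt17
    (n m : ℕ) (u v : ℕ → ℤ)
    (hn : 1 ≤ n) (hnm : n < m)
    (hu1 : u 1 = 1)
    (humono : ∀ i, 1 ≤ i → i + 1 ≤ n → u i < u (i + 1))
    (hum : u n < (m : ℤ))
    (hv1 : 1 < v 1)
    (hvmono : ∀ i, 1 ≤ i → i + 1 ≤ n → v i < v (i + 1))
    (hvn : v n = (m : ℤ))
    (huv : ∀ i, 1 ≤ i → i ≤ n → u i < v i)
    (hstep : ∀ i, 1 ≤ i → i + 1 ≤ n → u (i + 1) ≤ v i + 1)
    (hue : ∀ i, 1 ≤ i → i + 1 ≤ n → u (i + 1) - u i = 1)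
    (hve : ∀ i, 1 ≤ i → i + 1 ≤ n → v (i + 1) - v i = 1) :
    ∀ r : ℕ, 2 ≤ r → (IsPure ↥(PLr n u v (r : ℤ)) ↔ r = m) := by
  -- the sequences are forced
  have hu0 : ∀ t, t ≤ n → 1 ≤ t → u t = (t:ℤ) := by
    intro t
    induction t with
    | zero => intro _ h; omega
    | succ s ih =>
      intro hsn _
      rcases Nat.eq_zero_or_pos s with hs | hs
      · subst hs; simpa using hu1
      · have h2 := ih (le_trans (Nat.le_succ s) hsn) hs
        have h1 := hue s hs hsn
        push_cast
        push_cast at h2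
        linarith
  have hu' : ∀ t, 1 ≤ t → t ≤ n → u t = (t:ℤ) := fun t h1 h2 => hu0 t h2 h1
  have hv0 : ∀ d, d < n → v (n - d) = (m:ℤ) - d := by
    intro d
    induction d with
    | zero => intro _; simpa using hvn
    | succ s ih =>
      intro hsn
      have h2 := ih (by omega)
      have hi1 : 1 ≤ n - s - 1 := by omega
      have hie : n - s - 1 + 1 = n - s := by omega
      have h1 := hve (n - s - 1) hi1 (by omega)
      rw [hie] at h1
      have hgoal : n - (s + 1) = n - s - 1 := by omega
      rw [hgoal]
      push_cast
      linarith
  have hv' : ∀ t, 1 ≤ t → t ≤ n → v t = (m:ℤ) - n + t := by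
    intro t h1 h2
    have he : n - (n - t) = t := by omega
    have h3 := hv0 (n - t) (by omega)
    rw [he] at h3
    rw [h3]
    omega
  intro r hr
  have hrz : (2:ℤ) ≤ (r:ℤ) := by exact_mod_cast hr
  have hnmz : (n:ℤ) < m := by exact_mod_cast hnm
  -- the bottom element
  have hb0p : atuple u n n ((n:ℤ)+1) ∈ PL n u v := by
    refine ⟨n, (n:ℤ)+1, hn, le_rfl, ?_, ?_, rfl⟩
    · rw [hu' n hn le_rfl]
    · rw [hv' n hn le_rfl]; linarith
  have hb0m : ((atuple u n n ((n:ℤ)+1), 1) : (ℕ → ℤ) × ℤ) ∈ PLr n u v (r:ℤ) :=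
    Or.inl ⟨hb0p, rfl⟩
  constructor
  · -- purity implies r = m
    intro hpure
    set Ufull : Set ↥(PLr n u v (r:ℤ)) :=
      {x | (x : (ℕ → ℤ) × ℤ).1 = utuple u n} with hUdef
    have hUchain : IsChain (· ≤ ·) Ufull := by
      intro a ha b hb _
      rcases le_total ((a : (ℕ → ℤ) × ℤ).2) ((b : (ℕ → ℤ) × ℤ).2) with h | h
      · left
        show a ≤ b
        rw [← Subtype.coe_le_coe, Prod.le_def]
        exact ⟨le_of_eq (ha.trans hb.symm), h⟩
      · right
        show b ≤ a
        rw [← Subtype.coe_le_coe, Prod.le_def]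
        exact ⟨le_of_eq (hb.trans ha.symm), h⟩
    have hUmax : IsMaxChain (· ≤ ·) Ufull := by
      refine ⟨hUchain, ?_⟩
      intro t ht hsub
      apply Set.Subset.antisymm hsub
      intro z hz
      by_contra hzne
      have hzG : (z : (ℕ → ℤ) × ℤ).1 ∈ PL n u v ∧ (z : (ℕ → ℤ) × ℤ).2 = 1 := by
        have hzm : (z : (ℕ → ℤ) × ℤ) ∈ PLr n u v (r:ℤ) := z.2
        rcases hzm with h | h
        · exact h
        · exact absurd h.1 hzne
      have hz0m : ((utuple u n, 2) : (ℕ → ℤ) × ℤ) ∈ PLr n u v (r:ℤ) :=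
        Or.inr ⟨rfl, le_rfl, hrz⟩
      have hz0U : (⟨(utuple u n, 2), hz0m⟩ : ↥(PLr n u v (r:ℤ))) ∈ Ufull := rfl
      obtain ⟨hne', hn1, hn2⟩ :=
        cross_incomp hu' hv' z ⟨(utuple u n, 2), hz0m⟩ hzG ⟨rfl, le_rfl⟩
      rcases ht hz (hsub hz0U) hne' with hle | hle
      · exact hn1 hle
      · exact hn2 hle
    have hUncard : Ufull.ncard = ((r:ℤ) - 1).toNat :=
      ncard_Uchain hu' hUmax (fun a ha => ha)
    -- a maximal chain through the bottom element
    set b0 : ↥(PLr n u v (r:ℤ)) := ⟨(atuple u n n ((n:ℤ)+1), 1), hb0m⟩ with hb0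
    obtain ⟨M, hMmax, hMsub⟩ :=
      (Set.subsingleton_singleton (a := b0)).isChain (r := (· ≤ ·)).exists_maxChain
    have hb0M : b0 ∈ M := hMsub rfl
    have hMall : ∀ a ∈ M, (a : (ℕ → ℤ) × ℤ).1 ∈ PL n u v ∧ (a : (ℕ → ℤ) × ℤ).2 = 1 := by
      rcases chain_dichotomy hrz hu' hv' hMmax with hcase | hcase
      · exfalso
        have h1 := hcase b0 hb0M
        exact utuple_ne_atuple hu' hn le_rfl le_rfl h1.symm
      · exact hcase
    have hMncard : M.ncard = m - 1 := ncard_Gchain hn hnm hu' hv' hMmax hMall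
    have heq := hpure Ufull M hUmax hMmax
    rw [hUncard, hMncard] at heq
    omega
  · -- r = m implies purity
    intro hrm
    intro A B hAmax hBmax
    have count : ∀ C : Set ↥(PLr n u v (r:ℤ)), IsMaxChain (· ≤ ·) C → C.ncard = m - 1 := by
      intro C hC
      rcases chain_dichotomy hrz hu' hv' hC with hcase | hcase
      · rw [ncard_Uchain hu' hC hcase, hrm]
        omega
      · exact ncard_Gchain hn hnm hu' hv' hC hcase
    rw [count A hAmax, count B hBmax]

end LadderPaper
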